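/- Let B be a real symmetric N×N matrix with smallest eigenvalue λ_min, let γ : ℝ → ℝ be continuous and nonnegative, let T₀ ∈ ℝ, and let F : ℝ × ℝ^N → ℝ^N satisfy a Lipschitz condition with respect to the second variable with constant 𝓛 > 0. Let x : ℝ → ℝ^N and x₀ : ℝ → ℝ be such that ε(t) := x(t) − x₀(t)·𝟙 is C¹ on [T₀,∞) and satisfies ε′(t) = F(t, x(t)) − F(t, x₀(t)·𝟙) − γ(t)·(B·ε(t)) for all t ≥ T₀. Then for all t ≥ T₀, ‖ε(t)‖ ≤ ‖ε(T₀)‖·exp(𝓛·(t−T₀) − λ_min·∫_{T₀}^{t} γ(s) ds). -/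

import Mathlib

open Real Set Matrix intervalIntegral

local notation "⟪" x ", " y "⟫" => @inner ℝ _ _ x y

theorem stmt6 {N : ℕ} (hN : 0 < N) (B : Matrix (Fin N) (Fin N) ℝ)
    (hB : B.IsHermitian) (lmin : ℝ)
    (hmin_le : ∀ i, lmin ≤ hB.eigenvalues i)
    (hmin_mem : ∃ i, hB.eigenvalues i = lmin)
    (γ : ℝ → ℝ) (hγ : Continuous γ) (hγ0 : ∀ t, 0 ≤ γ t) (T₀ : ℝ)
    (F : ℝ → EuclideanSpace ℝ (Fin N) → EuclideanSpace ℝ (Fin N))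
    (L : ℝ) (hL : 0 < L)
    (hFLip : ∀ t x y, ‖F t x - F t y‖ ≤ L * ‖x - y‖)
    (ones : EuclideanSpace ℝ (Fin N)) (hones : ∀ i, ones i = 1)
    (x : ℝ → EuclideanSpace ℝ (Fin N)) (x₀ : ℝ → ℝ)
    (ε : ℝ → EuclideanSpace ℝ (Fin N)) (hε : ∀ t, ε t = x t - x₀ t • ones)
    (hC1 : ContDiffOn ℝ 1 ε (Set.Ici T₀))
    (hode : ∀ t, T₀ ≤ t →
      HasDerivAt ε
        (F t (x t) - F t (x₀ t • ones)
          - γ t • (Matrix.toEuclideanCLM (𝕜 := ℝ) (n := Fin N) B (ε t))) t) :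
    ∀ t, T₀ ≤ t →
      ‖ε t‖ ≤ ‖ε T₀‖ * Real.exp (L * (t - T₀) - lmin * ∫ s in T₀..t, γ s) := by
  classical
  set T : EuclideanSpace ℝ (Fin N) →L[ℝ] EuclideanSpace ℝ (Fin N) :=
    Matrix.toEuclideanCLM (𝕜 := ℝ) (n := Fin N) B with hT
  -- symmetry of T
  have hsym : (Matrix.toEuclideanLin B).IsSymmetric :=
    Matrix.isHermitian_iff_isSymmetric.1 hB
  have hTsym : ∀ u v : EuclideanSpace ℝ (Fin N), ⟪T u, v⟫ = ⟪u, T v⟫ := by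
    intro u v
    have h := hsym u v
    have e : ∀ w, T w = Matrix.toEuclideanLin B w := by
      intro w
      rw [hT, ← Matrix.coe_toEuclideanCLM_eq_toEuclideanLin]
      rfl
    rw [e, e]; exact h
  -- quadratic form lower bound
  have hquad : ∀ v : EuclideanSpace ℝ (Fin N), lmin * ‖v‖ ^ 2 ≤ ⟪v, T v⟫ := by
    intro v
    set b := hB.eigenvectorBasis with hb
    have hTb : ∀ j, T (b j) = hB.eigenvalues j • b j := by
      intro j
      have h := hB.mulVec_eigenvectorBasis j
      ext i
      have h1 : (T (b j)) i = (B *ᵥ ⇑(b j)) i := rfl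
      rw [h1, h]
      rfl
    have hreprT : ∀ i, b.repr (T v) i = hB.eigenvalues i * b.repr v i := by
      intro i
      rw [b.repr_apply_apply, b.repr_apply_apply, ← hTsym, hTb,
        real_inner_smul_left]
    have h1 : ⟪v, T v⟫ = ∑ i, b.repr v i * b.repr (T v) i := by
      rw [← b.repr.inner_map_map v (T v)]
      simp only [PiLp.inner_apply, RCLike.inner_apply, starRingEnd_apply, star_trivial]
      exact Finset.sum_congr rfl (fun i _ => mul_comm _ _)
    have h2 : ‖v‖ ^ 2 = ∑ i, b.repr v i * b.repr v i := by
      rw [← real_inner_self_eq_norm_sq, ← b.repr.inner_map_map v v]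
      simp only [PiLp.inner_apply, RCLike.inner_apply, starRingEnd_apply, star_trivial]
    rw [h1, h2, Finset.mul_sum]
    apply Finset.sum_le_sum
    intro i _
    rw [hreprT i]
    have := hmin_le i
    nlinarith [mul_self_nonneg (b.repr v i)]
  -- coefficient function and its primitive
  set a : ℝ → ℝ := fun s => L - lmin * γ s with ha_def
  have ha : Continuous a := continuous_const.sub (continuous_const.mul hγ)
  set A : ℝ → ℝ := fun t => ∫ s in T₀..t, a s with hA_def
  have hA : ∀ t, HasDerivAt A (a t) t := fun t =>
    intervalIntegral.integral_hasDerivAt_right (ha.intervalIntegrable _ _)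
      (ha.stronglyMeasurableAtFilter _ _) ha.continuousAt
  set d : ℝ → EuclideanSpace ℝ (Fin N) := fun t =>
    F t (x t) - F t (x₀ t • ones) - γ t • T (ε t) with hd_def
  have hd : ∀ t, T₀ ≤ t → HasDerivAt ε (d t) t := hode
  set w : ℝ → ℝ := fun t => ⟪ε t, ε t⟫ * Real.exp (-(2 * A t)) with hw_def
  have hwderiv : ∀ t, T₀ ≤ t → HasDerivAt w
      ((⟪ε t, d t⟫ + ⟪d t, ε t⟫) * Real.exp (-(2 * A t))
        + ⟪ε t, ε t⟫ * (Real.exp (-(2 * A t)) * -(2 * a t))) t := by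
    intro t ht
    have h1 : HasDerivAt (fun t => ⟪ε t, ε t⟫) (⟪ε t, d t⟫ + ⟪d t, ε t⟫) t :=
      HasDerivAt.inner ℝ (hd t ht) (hd t ht)
    have h2 : HasDerivAt (fun t => Real.exp (-(2 * A t)))
        (Real.exp (-(2 * A t)) * -(2 * a t)) t :=
      (((hA t).const_mul 2).neg).exp
    exact h1.mul h2
  -- the derivative is nonpositive
  have hkey : ∀ t, T₀ ≤ t → ⟪ε t, d t⟫ ≤ a t * ⟪ε t, ε t⟫ := by
    intro t ht
    have hsplit : ⟪ε t, d t⟫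
        = ⟪ε t, F t (x t) - F t (x₀ t • ones)⟫ - γ t * ⟪ε t, T (ε t)⟫ := by
      rw [hd_def]
      simp only [inner_sub_right, real_inner_smul_right]
    have hG : ⟪ε t, F t (x t) - F t (x₀ t • ones)⟫ ≤ ‖ε t‖ * (L * ‖ε t‖) := by
      refine le_trans (real_inner_le_norm _ _) ?_
      have := hFLip t (x t) (x₀ t • ones)
      rw [← hε t] at this
      exact mul_le_mul_of_nonneg_left this (norm_nonneg _)
    have hq := hquad (ε t)
    have hγt := hγ0 t
    have hself : ⟪ε t, ε t⟫ = ‖ε t‖ ^ 2 := real_inner_self_eq_norm_sq (ε t)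
    have hat : a t = L - lmin * γ t := rfl
    rw [hsplit, hself, hat]
    nlinarith [mul_le_mul_of_nonneg_left hq hγt]
  have hmono : AntitoneOn w (Set.Ici T₀) := by
    apply antitoneOn_of_deriv_nonpos (convex_Ici T₀)
    · exact fun t ht => (hwderiv t ht).continuousAt.continuousWithinAt
    · intro t ht
      rw [interior_Ici] at ht
      exact (hwderiv t ht.le).differentiableAt.differentiableWithinAt
    · intro t ht
      rw [interior_Ici] at ht
      rw [(hwderiv t ht.le).deriv]
      have hk := hkey t ht.le
      have hk2 : ⟪d t, ε t⟫ ≤ a t * ⟪ε t, ε t⟫ := by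
        rwa [real_inner_comm] at hk
      have hE := Real.exp_pos (-(2 * A t))
      nlinarith [hk, hk2, hE.le]
  -- conclude
  intro t ht
  have hw_le : w t ≤ w T₀ := hmono Set.self_mem_Ici ht ht
  have hA0 : A T₀ = 0 := intervalIntegral.integral_same
  have hAt : A t = L * (t - T₀) - lmin * ∫ s in T₀..t, γ s := by
    have h1 : (∫ s in T₀..t, a s)
        = (∫ s in T₀..t, (L : ℝ)) - ∫ s in T₀..t, lmin * γ s := by
      simp only [ha_def]
      rw [← intervalIntegral.integral_sub (g := fun s => lmin * γ s) intervalIntegrable_const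
        ((continuous_const.mul hγ).intervalIntegrable _ _)]
    have h2 : A t = ∫ s in T₀..t, a s := rfl
    rw [h2, h1, intervalIntegral.integral_const, intervalIntegral.integral_const_mul,
      smul_eq_mul]
    ring
  have hself : ∀ s, ⟪ε s, ε s⟫ = ‖ε s‖ ^ 2 := fun s => real_inner_self_eq_norm_sq (ε s)
  rw [hw_def] at hw_le
  simp only [hself, hA0] at hw_le
  have hw_le2 : ‖ε t‖ ^ 2 * Real.exp (-(2 * A t)) ≤ ‖ε T₀‖ ^ 2 := by
    simpa using hw_le
  rw [← hAt]
  have hR : (0 : ℝ) ≤ ‖ε T₀‖ * Real.exp (A t) :=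
    mul_nonneg (norm_nonneg _) (Real.exp_pos _).le
  refine le_of_pow_le_pow_left₀ two_ne_zero hR ?_
  have hsq : (‖ε T₀‖ * Real.exp (A t)) ^ 2 = ‖ε T₀‖ ^ 2 * Real.exp (2 * A t) := by
    have h3 : Real.exp (A t) ^ 2 = Real.exp (2 * A t) := by
      rw [sq, ← Real.exp_add, two_mul]
    rw [mul_pow, h3]
  rw [hsq]
  have e1 : Real.exp (-(2 * A t)) * Real.exp (2 * A t) = 1 := by
    rw [← Real.exp_add]; norm_num
  nlinarith [Real.exp_pos (2 * A t), Real.exp_pos (-(2 * A t)), hw_le2,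
    sq_nonneg (‖ε t‖)]
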